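/- Let n be an even natural number with n ≥ 2, and let s_n = 1/√(n²+1). Then for every real x with 0 ≤ x ≤ s_n, one has C_n(x) = |T_n(x)| + |x·T_n'(x)| ≥ 1. -/

import Mathlib

open Polynomial

lemma aux_cos_add_mul_sin {t : ℝ} (ht0 : 0 ≤ t) (ht1 : t ≤ 1) :
    1 ≤ Real.cos t + t * Real.sin t := by
  rcases eq_or_lt_of_le ht0 with h | h
  · simp [← h]
  · have h1 := Real.one_sub_sq_div_two_le_cos (x := t)
    have h2 := Real.sin_gt_sub_cube h
    have h3 : t ^ 2 - t ^ 4 / 4 ≤ t * Real.sin t := by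
      nlinarith [mul_le_mul_of_nonneg_left h2.le ht0]
    have ht2 : t ^ 2 ≤ 1 := by nlinarith
    have h4 : t ^ 4 ≤ t ^ 2 := by nlinarith [sq_nonneg t, sq_nonneg (t ^ 2)]
    linarith [sq_nonneg t]

/-- For even `n ≥ 2` and `0 ≤ x ≤ s_n = 1/√(n²+1)`, one has
`C_n(x) = |T_n(x)| + |x·T_n'(x)| ≥ 1`. -/
theorem chebyshev_C_ge_one_of_even
    (n : ℕ) (hn : 2 ≤ n) (hne : Even n) (x : ℝ)
    (hx0 : 0 ≤ x) (hx1 : x ≤ 1 / Real.sqrt ((n : ℝ) ^ 2 + 1)) :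
    1 ≤ |(Chebyshev.T ℝ n).eval x| + |x * (derivative (Chebyshev.T ℝ n)).eval x| := by
  have hnR : (1 : ℝ) ≤ (n : ℝ) := by exact_mod_cast Nat.one_le_of_lt hn
  set S := Real.sqrt ((n : ℝ) ^ 2 + 1) with hSdef
  have hSpos : 0 < S := Real.sqrt_pos.mpr (by positivity)
  have hS2 : S ^ 2 = (n : ℝ) ^ 2 + 1 := Real.sq_sqrt (by positivity)
  have hS1 : 1 ≤ S := by nlinarith
  have hx1' : x ≤ 1 := le_trans hx1 (by rw [div_le_one hSpos]; exact hS1)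
  set δ := Real.arcsin x with hδdef
  have hδ0 : 0 ≤ δ := Real.arcsin_nonneg.mpr hx0
  have hsin : Real.sin δ = x := Real.sin_arcsin (by linarith) hx1'
  have hcos : Real.cos δ = Real.sqrt (1 - x ^ 2) := Real.cos_arcsin x
  -- lower bound on cos δ
  have hcosge : (n : ℝ) / S ≤ Real.cos δ := by
    rw [hcos]
    have h1 : ((n : ℝ) / S) ^ 2 ≤ 1 - x ^ 2 := by
      have h1S : (0:ℝ) < 1 / S := by positivity
      have hx2 : x ^ 2 ≤ (1 / S) ^ 2 := sq_le_sq' (by linarith) hx1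
      have hsum : ((n : ℝ) / S) ^ 2 + (1 / S) ^ 2 = 1 := by
        field_simp
        linarith [hS2]
      linarith
    calc (n : ℝ) / S = Real.sqrt (((n : ℝ) / S) ^ 2) := by
          rw [Real.sqrt_sq (by positivity)]
      _ ≤ _ := Real.sqrt_le_sqrt h1
  have hcospos : 0 < Real.cos δ := lt_of_lt_of_le (by positivity) hcosge
  have hnx : (n : ℝ) * x ≤ Real.cos δ := by
    calc (n : ℝ) * x ≤ (n : ℝ) * (1 / S) := by
          exact mul_le_mul_of_nonneg_left hx1 (by positivity)
      _ = (n : ℝ) / S := by ring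
      _ ≤ Real.cos δ := hcosge
  have hδlt : δ < Real.pi / 2 := by
    rcases lt_or_eq_of_le (Real.arcsin_le_pi_div_two x) with h | h
    · exact h
    · exfalso; rw [hδdef, h] at hcospos; simp [Real.cos_pi_div_two] at hcospos
  -- t = n * δ ≤ n * tan δ = n*x/cos δ ≤ 1
  have htan : δ * Real.cos δ ≤ x := by
    rcases eq_or_lt_of_le hδ0 with h | h
    · simp [← h, hx0]
    · have := Real.lt_tan h hδlt
      rw [Real.tan_eq_sin_div_cos, hsin] at this
      calc δ * Real.cos δ ≤ (x / Real.cos δ) * Real.cos δ := by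
            exact mul_le_mul_of_nonneg_right this.le hcospos.le
        _ = x := by field_simp
  set t := (n : ℝ) * δ with htdef
  have ht0 : 0 ≤ t := by positivity
  have ht1 : t ≤ 1 := by
    have : t * Real.cos δ ≤ Real.cos δ := by
      calc t * Real.cos δ = (n : ℝ) * (δ * Real.cos δ) := by ring
        _ ≤ (n : ℝ) * x := by
            exact mul_le_mul_of_nonneg_left htan (by positivity)
        _ ≤ Real.cos δ := hnx
    exact le_of_mul_le_mul_right (by linarith) hcospos
  have hsint : 0 ≤ Real.sin t :=
    Real.sin_nonneg_of_nonneg_of_le_pi ht0 (by linarith [Real.pi_gt_three])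
  have hcost : 0 ≤ Real.cos t :=
    Real.cos_nonneg_of_mem_Icc ⟨by linarith [Real.pi_gt_three], by linarith [Real.pi_gt_three]⟩
  -- evaluate the Chebyshev polynomials
  obtain ⟨m, hm⟩ := hne
  have hmn : (n : ℝ) = 2 * (m : ℝ) := by
    have : n = 2 * m := by omega
    exact_mod_cast congrArg (Nat.cast : ℕ → ℝ) this
  have hθ : x = Real.cos (Real.pi / 2 - δ) := by
    rw [Real.cos_pi_div_two_sub, hsin]
  have hangle : (n : ℝ) * (Real.pi / 2 - δ) = (m : ℝ) * Real.pi - t := by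
    rw [htdef, hmn]; ring
  have hT : (Chebyshev.T ℝ n).eval x = (-1) ^ (m : ℕ) * Real.cos t := by
    rw [hθ]
    have := Polynomial.Chebyshev.T_real_cos (Real.pi / 2 - δ) (n : ℤ)
    push_cast at this
    rw [this, hangle, Real.cos_nat_mul_pi_sub]
  have hU : (derivative (Chebyshev.T ℝ n)).eval x * Real.cos δ
      = -((n : ℝ) * ((-1) ^ (m : ℕ) * Real.sin t)) := by
    rw [Polynomial.Chebyshev.T_derivative_eq_U]
    have hu := Polynomial.Chebyshev.U_real_cos (Real.pi / 2 - δ) ((n : ℤ) - 1)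
    push_cast at hu
    have hsinθ : Real.sin (Real.pi / 2 - δ) = Real.cos δ := Real.sin_pi_div_two_sub δ
    rw [hsinθ] at hu
    have : ((n : ℝ) - 1 + 1) = (n : ℝ) := by ring
    rw [this] at hu
    rw [hθ]
    simp only [Polynomial.eval_mul, Polynomial.eval_intCast]
    push_cast
    rw [mul_assoc, hu, hangle, Real.sin_nat_mul_pi_sub]
    ring
  -- put it together
  have habs1 : |(Chebyshev.T ℝ n).eval x| = Real.cos t := by
    rw [hT, abs_mul, abs_pow, abs_neg, abs_one, one_pow, one_mul, abs_of_nonneg hcost]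
  have hd : (derivative (Chebyshev.T ℝ n)).eval x
      = -((n : ℝ) * ((-1) ^ (m : ℕ) * Real.sin t)) / Real.cos δ := by
    field_simp [hcospos.ne'] at hU ⊢
    linarith [hU]
  have habs2 : |x * (derivative (Chebyshev.T ℝ n)).eval x|
      = x * ((n : ℝ) * Real.sin t) / Real.cos δ := by
    rw [hd, abs_mul, abs_div, abs_neg, abs_mul, abs_mul, abs_pow, abs_neg, abs_one, one_pow,
      one_mul, abs_of_nonneg hx0, abs_of_nonneg hsint, abs_of_nonneg hcospos.le,
      abs_of_nonneg (by positivity : (0:ℝ) ≤ (n:ℝ))]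
    ring
  rw [habs1, habs2]
  have key : t * Real.sin t ≤ x * ((n : ℝ) * Real.sin t) / Real.cos δ := by
    have h1 : t * Real.cos δ ≤ x * (n : ℝ) := by
      calc t * Real.cos δ = (n : ℝ) * (δ * Real.cos δ) := by ring
        _ ≤ (n : ℝ) * x := mul_le_mul_of_nonneg_left htan (by positivity)
        _ = x * (n : ℝ) := by ring
    rw [le_div_iff₀ hcospos]
    calc t * Real.sin t * Real.cos δ = (t * Real.cos δ) * Real.sin t := by ring
      _ ≤ (x * (n : ℝ)) * Real.sin t := mul_le_mul_of_nonneg_right h1 hsint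
      _ = x * ((n : ℝ) * Real.sin t) := by ring
  linarith [aux_cos_add_mul_sin ht0 ht1]
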